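/- arXiv:2105.12204 — 7 statements merged into one kernel-verified Lean document; each statement's English description precedes it below -/
import Mathlib

section
/- There exists a single controller that is simultaneously safe for every viable state: there is a controller b : X → U such that for every x ∈ X_V and every t ∈ ℕ, φ_x^b(t) ∈ X_V (in particular, b is safe for every x ∈ X_V). -/
open Set

noncomputable section

/-- Trajectory of the discrete-time system `x_{t+1} = f(x_t, u(x_t))` starting at `x`. -/
def traj {X U : Type*} (f : X → U → X) (u : X → U) (x : X) : ℕ → X
  | 0 => x
  | t + 1 => f (traj f u x t) (u (traj f u x t))

/-- The controller `u` is safe for the state `x`: the trajectory never enters the failure set. -/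
def SafeFor {X U : Type*} (f : X → U → X) (XF : Set X) (u : X → U) (x : X) : Prop :=
  ∀ t : ℕ, traj f u x t ∉ XF

/-- The viability kernel: states from which some controller avoids failure forever. -/
def viab {X U : Type*} (f : X → U → X) (XF : Set X) : Set X :=
  {x | ∃ u : X → U, SafeFor f XF u x}

/-- there is a single controller that keeps every viable state in
the viability kernel forever (in particular it is safe for every viable state). -/
theorem exists_safe_controller {X U : Type*} [Nonempty U]
    (f : X → U → X) (XF : Set X) :
    ∃ b : X → U, ∀ x ∈ viab f XF, ∀ t : ℕ, traj f b x t ∈ viab f XF := by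
  classical
  have shift : ∀ (u : X → U) (x : X) (t : ℕ),
      traj f u (f x (u x)) t = traj f u x (t + 1) := by
    intro u x t
    induction t with
    | zero => rfl
    | succ n ih => simp [traj, ih]
  set b : X → U := fun x => if h : x ∈ viab f XF then Classical.choose h x
    else Classical.arbitrary U with hb
  have step : ∀ x ∈ viab f XF, f x (b x) ∈ viab f XF := by
    intro x hx
    obtain ⟨u, hu⟩ := hx
    have hbx : b x = Classical.choose (⟨u, hu⟩ : x ∈ viab f XF) x := by
      simp [hb, show x ∈ viab f XF from ⟨u, hu⟩]
    rw [hbx]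
    set u' := Classical.choose (⟨u, hu⟩ : x ∈ viab f XF) with hu'
    have hsafe : SafeFor f XF u' x := Classical.choose_spec (⟨u, hu⟩ : x ∈ viab f XF)
    exact ⟨u', fun t => by rw [shift]; exact hsafe (t + 1)⟩
  refine ⟨b, fun x hx t => ?_⟩
  induction t with
  | zero => exact hx
  | succ n ih => exact step _ ih
end
end

section
/- (Proposition 1.) Let p ≥ 0. Suppose that for every x ∈ X_V the supremum defining V_p(x) is attained by some controller, and that every controller u attaining it (i.e., G(x,u) − p·ρ(x,u) = V_p(x)) is safe for x. Then V_p(x) = V(x) for all x ∈ X_V. -/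
open Set

noncomputable section

/-- Discounted return `G(x,u)`. -/
def ret {X U : Type*} (γ : ℝ) (f : X → U → X) (r : X → U → ℝ) (x : X) (u : X → U) : ℝ :=
  ∑' t : ℕ, γ ^ t * r (traj f u x t) (u (traj f u x t))

/-- Discounted risk `ρ(x,u)`. -/
def risk {X U : Type*} (γ : ℝ) (f : X → U → X) (XF : Set X) (x : X) (u : X → U) : ℝ :=
  ∑' t : ℕ, γ ^ t * XF.indicator (fun _ => (1 : ℝ)) (traj f u x t)

/-- Penalized value function `V_p(x)`. -/
def Vpen {X U : Type*} (γ : ℝ) (f : X → U → X) (XF : Set X) (r : X → U → ℝ) (p : ℝ)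
    (x : X) : ℝ :=
  ⨆ u : X → U, (ret γ f r x u - p * risk γ f XF x u)

/-- Constrained value function `V(x)`: supremum of the return over safe controllers. -/
def Vcon {X U : Type*} (γ : ℝ) (f : X → U → X) (XF : Set X) (r : X → U → ℝ) (x : X) : ℝ :=
  ⨆ u : {u : X → U // SafeFor f XF u x}, ret γ f r x (u : X → U)

/-- Proposition 1: if, for every viable state, the penalized supremum is
attained and every maximizer is safe, then `V_p` coincides with `V` on the viability kernel. -/
theorem penalized_eq_constrained_of_maximizers_safe {X U : Type*} [Nonempty U]
    (f : X → U → X) (XF : Set X) (γ : ℝ) (hγ0 : 0 < γ) (hγ1 : γ < 1)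
    (r : X → U → ℝ) (hr : ∃ C : ℝ, ∀ x a, |r x a| ≤ C)
    (p : ℝ) (hp : 0 ≤ p)
    (hattain : ∀ x ∈ viab f XF, ∃ u : X → U,
      ret γ f r x u - p * risk γ f XF x u = Vpen γ f XF r p x)
    (hsafe : ∀ x ∈ viab f XF, ∀ u : X → U,
      ret γ f r x u - p * risk γ f XF x u = Vpen γ f XF r p x → SafeFor f XF u x) :
    ∀ x ∈ viab f XF, Vpen γ f XF r p x = Vcon γ f XF r x := by
  obtain ⟨C, hC⟩ := hr
  have hγ0' : 0 ≤ γ := hγ0.le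
  have hgsum : Summable (fun t : ℕ => C * γ ^ t) :=
    (summable_geometric_of_lt_one hγ0' hγ1).mul_left C
  have hretsum : ∀ (x : X) (u : X → U),
      Summable (fun t : ℕ => γ ^ t * r (traj f u x t) (u (traj f u x t))) := by
    intro x u
    refine Summable.of_norm_bounded hgsum ?_
    intro t
    rw [Real.norm_eq_abs, abs_mul, abs_pow, abs_of_nonneg hγ0', mul_comm]
    exact mul_le_mul_of_nonneg_right (hC _ _) (pow_nonneg hγ0' t)
  have hretle : ∀ (x : X) (u : X → U), ret γ f r x u ≤ C * (1 - γ)⁻¹ := by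
    intro x u
    have h1 : ret γ f r x u ≤ ∑' t : ℕ, C * γ ^ t := by
      refine Summable.tsum_le_tsum (fun t => ?_) (hretsum x u) hgsum
      rw [mul_comm]
      exact mul_le_mul_of_nonneg_right ((le_abs_self _).trans (hC _ _))
        (pow_nonneg hγ0' t)
    calc ret γ f r x u ≤ ∑' t : ℕ, C * γ ^ t := h1
      _ = C * (1 - γ)⁻¹ := by
          rw [tsum_mul_left, tsum_geometric_of_lt_one hγ0' hγ1]
  have hrisk0 : ∀ (x : X) (u : X → U), SafeFor f XF u x → risk γ f XF x u = 0 := by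
    intro x u hs
    have : ∀ t : ℕ, γ ^ t * XF.indicator (fun _ => (1 : ℝ)) (traj f u x t) = 0 := by
      intro t
      rw [Set.indicator_of_notMem (hs t), mul_zero]
    simp [risk, this]
  have hrisknn : ∀ (x : X) (u : X → U), 0 ≤ risk γ f XF x u := by
    intro x u
    refine tsum_nonneg fun t => mul_nonneg (pow_nonneg hγ0' t) ?_
    exact Set.indicator_nonneg (fun _ _ => zero_le_one) _
  intro x hx
  obtain ⟨u₀, hu₀⟩ := hattain x hx
  have hu₀safe : SafeFor f XF u₀ x := hsafe x hx u₀ hu₀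
  have hVpenbdd : BddAbove (Set.range fun u : X → U =>
      ret γ f r x u - p * risk γ f XF x u) := by
    refine ⟨C * (1 - γ)⁻¹, ?_⟩
    rintro _ ⟨u, rfl⟩
    have := mul_nonneg hp (hrisknn x u)
    linarith [hretle x u]
  have hVconbdd : BddAbove (Set.range fun u : {u : X → U // SafeFor f XF u x} =>
      ret γ f r x (u : X → U)) := by
    refine ⟨C * (1 - γ)⁻¹, ?_⟩
    rintro _ ⟨u, rfl⟩
    exact hretle x u
  haveI : Nonempty {u : X → U // SafeFor f XF u x} := ⟨⟨u₀, hu₀safe⟩⟩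
  apply le_antisymm
  · rw [← hu₀, hrisk0 x u₀ hu₀safe, mul_zero, sub_zero]
    exact le_ciSup hVconbdd (⟨u₀, hu₀safe⟩ : {u : X → U // SafeFor f XF u x})
  · refine ciSup_le fun u => ?_
    have h0 : risk γ f XF x (u : X → U) = 0 := hrisk0 x u u.2
    have : ret γ f r x (u : X → U) =
        ret γ f r x (u : X → U) - p * risk γ f XF x (u : X → U) := by
      rw [h0, mul_zero, sub_zero]
    rw [this]
    exact le_ciSup hVpenbdd (u : X → U)
end
end

section
/- (Appendix Lemma, direction (i) ⇒ (ii).) Let p ≥ 0. Suppose that for every x ∈ X_V the supremum defining V_p(x) is attained by some controller, and that every controller attaining it is safe for x. Then for every x ∈ X_V and every controller u_F that is not safe for x, G(x,u_F) − p·ρ(x,u_F) < V(x). -/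
open Set

noncomputable section

/-- Appendix Lemma, (i) ⇒ (ii): if the penalized supremum is attained at
every viable state and every maximizer is safe, then every unsafe controller is strictly
suboptimal for the penalized objective, compared with the constrained value. -/
theorem unsafe_strictly_suboptimal_of_maximizers_safe {X U : Type*} [Nonempty U]
    (f : X → U → X) (XF : Set X) (γ : ℝ) (hγ0 : 0 < γ) (hγ1 : γ < 1)
    (r : X → U → ℝ) (hr : ∃ C : ℝ, ∀ x a, |r x a| ≤ C)
    (p : ℝ) (hp : 0 ≤ p)
    (hattain : ∀ x ∈ viab f XF, ∃ u : X → U,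
      ret γ f r x u - p * risk γ f XF x u = Vpen γ f XF r p x)
    (hsafe : ∀ x ∈ viab f XF, ∀ u : X → U,
      ret γ f r x u - p * risk γ f XF x u = Vpen γ f XF r p x → SafeFor f XF u x) :
    ∀ x ∈ viab f XF, ∀ uF : X → U, ¬ SafeFor f XF uF x →
      ret γ f r x uF - p * risk γ f XF x uF < Vcon γ f XF r x := by

  obtain ⟨C, hC⟩ := hr
  intro x hx uF huF
  have hγ := hγ0.le
  have hgeo : Summable (fun t : ℕ => γ ^ t) := summable_geometric_of_lt_one hγ hγ1
  have hgeoC : Summable (fun t : ℕ => γ ^ t * C) := hgeo.mul_right C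
  have hretsum : ∀ u : X → U,
      Summable (fun t : ℕ => γ ^ t * r (traj f u x t) (u (traj f u x t))) := by
    intro u
    apply Summable.of_abs
    apply Summable.of_nonneg_of_le (fun t => abs_nonneg _) _ hgeoC
    intro t
    rw [abs_mul, abs_pow, abs_of_nonneg hγ]
    exact mul_le_mul_of_nonneg_left (hC _ _) (pow_nonneg hγ t)
  have hretbound : ∀ u : X → U, ret γ f r x u ≤ ∑' t : ℕ, γ ^ t * C := by
    intro u
    apply Summable.tsum_le_tsum _ (hretsum u) hgeoC
    intro t
    calc γ ^ t * r (traj f u x t) (u (traj f u x t)) ≤ γ ^ t * |r (traj f u x t) (u (traj f u x t))| :=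
          mul_le_mul_of_nonneg_left (le_abs_self _) (pow_nonneg hγ t)
      _ ≤ γ ^ t * C := mul_le_mul_of_nonneg_left (hC _ _) (pow_nonneg hγ t)
  have hrisknonneg : ∀ u : X → U, 0 ≤ risk γ f XF x u := by
    intro u
    apply tsum_nonneg
    intro t
    apply mul_nonneg (pow_nonneg hγ t)
    exact Set.indicator_nonneg (fun _ _ => zero_le_one) _
  have hbdd : BddAbove (Set.range fun u : X → U =>
      ret γ f r x u - p * risk γ f XF x u) := by
    refine ⟨∑' t : ℕ, γ ^ t * C, ?_⟩
    rintro _ ⟨u, rfl⟩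
    dsimp only
    have : 0 ≤ p * risk γ f XF x u := mul_nonneg hp (hrisknonneg u)
    linarith [hretbound u]
  obtain ⟨u0, hu0⟩ := hattain x hx
  have hs0 : SafeFor f XF u0 x := hsafe x hx u0 hu0
  have hrisk0 : risk γ f XF x u0 = 0 := by
    unfold risk
    convert tsum_zero with t
    rw [Set.indicator_of_notMem (hs0 t)]
    ring
  have hVpen : Vpen γ f XF r p x = ret γ f r x u0 := by
    rw [← hu0, hrisk0]; ring
  have hlt : ret γ f r x uF - p * risk γ f XF x uF < Vpen γ f XF r p x := by
    refine lt_of_le_of_ne (le_ciSup hbdd uF) ?_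
    intro heq
    exact huF (hsafe x hx uF heq)
  have hbdd2 : BddAbove (Set.range fun u : {u : X → U // SafeFor f XF u x} =>
      ret γ f r x (u : X → U)) := by
    refine ⟨∑' t : ℕ, γ ^ t * C, ?_⟩
    rintro _ ⟨u, rfl⟩
    exact hretbound u
  have hVcon : ret γ f r x u0 ≤ Vcon γ f XF r x :=
    le_ciSup hbdd2 ⟨u0, hs0⟩
  calc ret γ f r x uF - p * risk γ f XF x uF < Vpen γ f XF r p x := hlt
    _ = ret γ f r x u0 := hVpen
    _ ≤ Vcon γ f XF r x := hVcon
end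
end

section
/- (Risk lower bound on the unviability kernel.) Under the bounded time-to-failure assumption with bound T_f, for every x ∈ X_U and every controller u, ρ(x,u) ≥ γ^{T_f}. -/
open Set

noncomputable section

/-- under the bounded time-to-failure assumption with bound `Tf`, the risk of
any controller from any unviable state is at least `γ ^ Tf`. -/
theorem risk_lower_bound_on_unviable {X U : Type*} [Nonempty U]
    (f : X → U → X) (XF : Set X) (γ : ℝ) (hγ0 : 0 < γ) (hγ1 : γ < 1)
    (Tf : ℕ) (hTf : ∀ x, x ∉ viab f XF → ∀ u : X → U, ∃ t ≤ Tf, traj f u x t ∈ XF)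
    (x : X) (hx : x ∉ viab f XF) (u : X → U) :
    γ ^ Tf ≤ risk γ f XF x u := by
  obtain ⟨t, ht, hmem⟩ := hTf x hx u
  have hsum : Summable (fun t : ℕ => γ ^ t * XF.indicator (fun _ => (1 : ℝ)) (traj f u x t)) := by
    apply Summable.of_nonneg_of_le
    · intro n
      apply mul_nonneg (pow_nonneg hγ0.le n)
      exact Set.indicator_nonneg (fun _ _ => zero_le_one) _
    · intro n
      have : XF.indicator (fun _ => (1 : ℝ)) (traj f u x n) ≤ 1 :=
        Set.indicator_le_self' (fun _ _ => zero_le_one) _ |>.trans_eq rfl |>.trans (by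
          by_cases h : traj f u x n ∈ XF <;> simp [h])
      calc γ ^ n * XF.indicator (fun _ => (1 : ℝ)) (traj f u x n)
          ≤ γ ^ n * 1 := by
            apply mul_le_mul_of_nonneg_left _ (pow_nonneg hγ0.le n)
            by_cases h : traj f u x n ∈ XF <;> simp [h]
        _ = γ ^ n := mul_one _
    · exact summable_geometric_of_lt_one hγ0.le hγ1
  have hle : γ ^ Tf ≤ γ ^ t * XF.indicator (fun _ => (1 : ℝ)) (traj f u x t) := by
    rw [Set.indicator_of_mem hmem, mul_one]
    exact pow_le_pow_of_le_one hγ0.le hγ1.le ht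
  refine hle.trans (Summable.le_tsum hsum t fun n _ => ?_)
  exact mul_nonneg (pow_nonneg hγ0.le n) (Set.indicator_nonneg (fun _ _ => zero_le_one) _)
end
end

section
/- (Return upper bound on the unviability kernel.) Assume X_F is absorbing (f(x,a) ∈ X_F whenever x ∈ X_F) and nonempty, and r(x,a) = 0 whenever x ∈ X_F. Under the bounded time-to-failure assumption with bound T_f, for every x ∈ X_U and every controller u, G(x,u) ≤ R_{X_U} · (1 − γ^{T_f+1}) / (1 − γ), where R_{X_U} = sSup {r(x,a) | x ∈ X_U, a ∈ U}. -/
open Set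

noncomputable section

/-- `R_{Q_V}`: infimum of the reward over state-control pairs transitioning into the kernel. -/
def RQV {X U : Type*} (f : X → U → X) (XF : Set X) (r : X → U → ℝ) : ℝ :=
  sInf {y : ℝ | ∃ q : X × U, f q.1 q.2 ∈ viab f XF ∧ y = r q.1 q.2}

/-- `R_{Q_U}`: supremum of the reward over state-control pairs transitioning out of the kernel. -/
def RQU {X U : Type*} (f : X → U → X) (XF : Set X) (r : X → U → ℝ) : ℝ :=
  sSup {y : ℝ | ∃ q : X × U, f q.1 q.2 ∉ viab f XF ∧ y = r q.1 q.2}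

/-- `R_{X_U}`: supremum of the reward over the unviability kernel. -/
def RXU {X U : Type*} (f : X → U → X) (XF : Set X) (r : X → U → ℝ) : ℝ :=
  sSup {y : ℝ | ∃ x, x ∉ viab f XF ∧ ∃ a : U, y = r x a}

/-- `inf_{X_V} V`: infimum of the constrained value function over the viability kernel. -/
def infV {X U : Type*} (γ : ℝ) (f : X → U → X) (XF : Set X) (r : X → U → ℝ) : ℝ :=
  sInf {y : ℝ | ∃ x ∈ viab f XF, y = Vcon γ f XF r x}

/-- `sup_{X_U} V_p`: supremum of the penalized value function over the unviability kernel. -/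
def supVp {X U : Type*} (γ : ℝ) (f : X → U → X) (XF : Set X) (r : X → U → ℝ) (p : ℝ) : ℝ :=
  sSup {y : ℝ | ∃ x, x ∉ viab f XF ∧ y = Vpen γ f XF r p x}


/-- Key lemma: states along a trajectory from an unviable state, before any failure,
are themselves unviable. -/
lemma traj_not_viab {X U : Type*} (f : X → U → X) (XF : Set X) (u : X → U) (x : X)
    (hx : x ∉ viab f XF) (t : ℕ) (h : ∀ s ≤ t, traj f u x s ∉ XF) :
    traj f u x t ∉ viab f XF := by
  classical
  rintro ⟨v, hv⟩
  set y := traj f u x t with hy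
  set P : Set X := {z | ∃ s < t, traj f u x s = z} with hP
  set w : X → U := fun z => if z ∈ P then u z else v z with hw
  apply hx
  refine ⟨w, ?_⟩
  set S : Set X := P ∪ Set.range (traj f v y) with hS
  have hstep : ∀ z ∈ S, f z (w z) ∈ S := by
    intro z hz
    by_cases hzP : z ∈ P
    · obtain ⟨s, hs, rfl⟩ := hzP
      have hwz : w (traj f u x s) = u (traj f u x s) := if_pos ⟨s, hs, rfl⟩
      rw [hwz]
      have : f (traj f u x s) (u (traj f u x s)) = traj f u x (s + 1) := rfl
      rw [this]
      rcases lt_or_eq_of_le (Nat.succ_le_of_lt hs) with h' | h'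
      · exact Or.inl ⟨s + 1, h', rfl⟩
      · right
        exact ⟨0, (congrArg (traj f u x) h'.symm : traj f u x t = traj f u x (s + 1))⟩
    · have hzR : z ∈ Set.range (traj f v y) := hz.resolve_left hzP
      obtain ⟨m, rfl⟩ := hzR
      have hwz : w (traj f v y m) = v (traj f v y m) := if_neg hzP
      rw [hwz]
      exact Or.inr ⟨m + 1, rfl⟩
  have hmem : ∀ n, traj f w x n ∈ S := by
    intro n
    induction n with
    | zero =>
      rcases Nat.eq_zero_or_pos t with ht | ht
      · subst ht
        exact Or.inr ⟨0, rfl⟩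
      · exact Or.inl ⟨0, ht, rfl⟩
    | succ n ih => exact hstep _ ih
  have hSXF : ∀ z ∈ S, z ∉ XF := by
    rintro z (⟨s, hs, rfl⟩ | ⟨m, rfl⟩)
    · exact h s hs.le
    · exact hv m
  intro n
  exact hSXF _ (hmem n)

/-- return upper bound on the unviability kernel. -/
theorem return_upper_bound_on_unviable {X U : Type*} [Nonempty U]
    (f : X → U → X) (XF : Set X) (γ : ℝ) (hγ0 : 0 < γ) (hγ1 : γ < 1)
    (r : X → U → ℝ) (hr : ∃ C : ℝ, ∀ x a, |r x a| ≤ C)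
    (habs : ∀ x ∈ XF, ∀ a : U, f x a ∈ XF) (hFne : XF.Nonempty)
    (hr0 : ∀ x ∈ XF, ∀ a : U, r x a = 0)
    (Tf : ℕ) (hTf : ∀ x, x ∉ viab f XF → ∀ u : X → U, ∃ t ≤ Tf, traj f u x t ∈ XF)
    (x : X) (hx : x ∉ viab f XF) (u : X → U) :
    ret γ f r x u ≤ RXU f XF r * (1 - γ ^ (Tf + 1)) / (1 - γ) := by
  classical
  obtain ⟨C, hC⟩ := hr
  have hbdd : BddAbove {y : ℝ | ∃ x, x ∉ viab f XF ∧ ∃ a : U, y = r x a} := by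
    refine ⟨C, ?_⟩
    rintro y ⟨z, hz, a, rfl⟩
    exact (abs_le.mp (hC z a)).2
  -- XF points are not viable
  have hXFnv : ∀ z ∈ XF, z ∉ viab f XF := by
    rintro z hz ⟨v, hv⟩
    exact hv 0 hz
  -- RXU ≥ 0
  have hRXU0 : 0 ≤ RXU f XF r := by
    obtain ⟨z, hz⟩ := hFne
    obtain ⟨a⟩ := ‹Nonempty U›
    have : (0 : ℝ) ∈ {y : ℝ | ∃ x, x ∉ viab f XF ∧ ∃ a : U, y = r x a} :=
      ⟨z, hXFnv z hz, a, (hr0 z hz a).symm⟩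
    exact le_csSup hbdd this
  -- first failure time
  have hex : ∃ t, traj f u x t ∈ XF := by
    obtain ⟨t, _, ht⟩ := hTf x hx u
    exact ⟨t, ht⟩
  set t0 := Nat.find hex with ht0
  have ht0Tf : t0 ≤ Tf := by
    obtain ⟨t, htTf, ht⟩ := hTf x hx u
    exact le_trans (Nat.find_min' hex ht) htTf
  have hafter : ∀ t, t0 ≤ t → traj f u x t ∈ XF := by
    intro t ht
    induction t with
    | zero => exact (Nat.le_zero.mp ht) ▸ Nat.find_spec hex
    | succ n ih =>
      rcases Nat.lt_or_ge t0 (n + 1) with h' | h'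
      · exact habs _ (ih (Nat.lt_succ_iff.mp h')) _
      · exact (Nat.le_antisymm ht h') ▸ Nat.find_spec hex
  set g : ℕ → ℝ := fun t => γ ^ t * r (traj f u x t) (u (traj f u x t)) with hg
  have hzero : ∀ t ∉ Finset.range t0, g t = 0 := by
    intro t ht
    rw [Finset.mem_range, not_lt] at ht
    simp [hg, hr0 _ (hafter t ht)]
  have hsum : ret γ f r x u = ∑ t ∈ Finset.range t0, g t := tsum_eq_sum hzero
  have hterm : ∀ t ∈ Finset.range t0, g t ≤ γ ^ t * RXU f XF r := by
    intro t ht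
    rw [Finset.mem_range] at ht
    have hnf : ∀ s ≤ t, traj f u x s ∉ XF := fun s hs =>
      Nat.find_min hex (lt_of_le_of_lt hs ht)
    have hnv : traj f u x t ∉ viab f XF := traj_not_viab f XF u x hx t hnf
    have : r (traj f u x t) (u (traj f u x t)) ≤ RXU f XF r :=
      le_csSup hbdd ⟨_, hnv, _, rfl⟩
    exact mul_le_mul_of_nonneg_left this (pow_nonneg hγ0.le t)
  have h1γ : 0 < 1 - γ := by linarith
  calc ret γ f r x u = ∑ t ∈ Finset.range t0, g t := hsum
    _ ≤ ∑ t ∈ Finset.range t0, γ ^ t * RXU f XF r := Finset.sum_le_sum hterm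
    _ = RXU f XF r * ((1 - γ ^ t0) / (1 - γ)) := by
        have hne : (1:ℝ) - γ ≠ 0 := by linarith
        have hne2 : γ - 1 ≠ 0 := by linarith
        rw [← Finset.sum_mul, geom_sum_eq hγ1.ne]
        field_simp
        ring
    _ ≤ RXU f XF r * ((1 - γ ^ (Tf + 1)) / (1 - γ)) := by
        have hpow : γ ^ (Tf + 1) ≤ γ ^ t0 :=
          pow_le_pow_of_le_one hγ0.le hγ1.le (by omega)
        apply mul_le_mul_of_nonneg_left _ hRXU0
        apply div_le_div_of_nonneg_right ?_ ?_
        · linarith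
        · exact h1γ.le
    _ = RXU f XF r * (1 - γ ^ (Tf + 1)) / (1 - γ) := by ring
end
end

section
/- (Theorem 2, discrete time: a finite penalty enforces the zeroth-order condition.) Assume X_F is absorbing (f(x,a) ∈ X_F whenever x ∈ X_F) and nonempty, r(x,a) = 0 whenever x ∈ X_F, X_V and X_U are nonempty, and the bounded time-to-failure assumption holds with bound T_f. Define p* = (R_{X_U} · (1 − γ^{T_f+1})/(1 − γ) + (R_{Q_U} − R_{Q_V})/γ − sInf {V(x) | x ∈ X_V}) / γ^{T_f}. Then for every p with p ≥ 0 and p > p*, the zeroth-order condition holds: R_{Q_U} + γ · sSup {V_p(x) | x ∈ X_U} < R_{Q_V} + γ · sInf {V(x) | x ∈ X_V}. -/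
open Set

noncomputable section

section Aux

variable {X U : Type*}

lemma notViab_of_mem_XF (f : X → U → X) (XF : Set X) {x : X} (hx : x ∈ XF) :
    x ∉ viab f XF := by
  rintro ⟨u, hu⟩
  exact hu 0 hx

lemma notViab_step (f : X → U → X) (XF : Set X)
    (habs : ∀ x ∈ XF, ∀ a : U, f x a ∈ XF)
    {x : X} (hx : x ∉ viab f XF) (a : U) : f x a ∉ viab f XF := by
  classical
  by_cases hxF : x ∈ XF
  · exact notViab_of_mem_XF f XF (habs x hxF a)
  · rintro ⟨u', hu'⟩
    apply hx
    refine ⟨fun z => if z = x then a else u' z, ?_⟩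
    set u'' : X → U := fun z => if z = x then a else u' z with hu''
    have key : ∀ t, traj f u'' x t = x ∨
        ∃ s, traj f u'' x t = traj f u' (f x a) s := by
      intro t
      induction t with
      | zero => exact Or.inl rfl
      | succ t ih =>
        rcases ih with h | ⟨s, h⟩
        · right
          refine ⟨0, ?_⟩
          show f (traj f u'' x t) (u'' (traj f u'' x t)) = traj f u' (f x a) 0
          rw [h]
          simp [hu'', traj]
        · by_cases hzx : traj f u'' x t = x
          · right
            refine ⟨0, ?_⟩
            show f (traj f u'' x t) (u'' (traj f u'' x t)) = traj f u' (f x a) 0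
            rw [hzx]
            simp [hu'', traj]
          · right
            refine ⟨s + 1, ?_⟩
            show f (traj f u'' x t) (u'' (traj f u'' x t)) = traj f u' (f x a) (s + 1)
            have : u'' (traj f u'' x t) = u' (traj f u'' x t) := by
              exact if_neg hzx
            rw [this, h]
            rfl
    intro t ht
    rcases key t with h | ⟨s, h⟩
    · exact hxF (h ▸ ht)
    · exact hu' s (h ▸ ht)

lemma traj_notViab (f : X → U → X) (XF : Set X)
    (habs : ∀ x ∈ XF, ∀ a : U, f x a ∈ XF)
    {x : X} (hx : x ∉ viab f XF) (u : X → U) :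
    ∀ t, traj f u x t ∉ viab f XF := by
  intro t
  induction t with
  | zero => exact hx
  | succ t ih => exact notViab_step f XF habs ih _

lemma traj_absorb (f : X → U → X) (XF : Set X)
    (habs : ∀ x ∈ XF, ∀ a : U, f x a ∈ XF) (u : X → U) (x : X)
    {t₀ : ℕ} (h : traj f u x t₀ ∈ XF) : ∀ t, t₀ ≤ t → traj f u x t ∈ XF := by
  have key : ∀ k, traj f u x (t₀ + k) ∈ XF := by
    intro k
    induction k with
    | zero => exact h
    | succ k ih => exact habs _ ih _
  intro t ht
  obtain ⟨k, rfl⟩ := Nat.exists_eq_add_of_le ht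
  exact key k

end Aux

/-- Theorem 2, discrete time: any penalty larger than the finite threshold
`p*` enforces the zeroth-order condition. -/
theorem finite_penalty_enforces_zeroth_order {X U : Type*} [Nonempty U]
    (f : X → U → X) (XF : Set X) (γ : ℝ) (hγ0 : 0 < γ) (hγ1 : γ < 1)
    (r : X → U → ℝ) (hr : ∃ C : ℝ, ∀ x a, |r x a| ≤ C)
    (habs : ∀ x ∈ XF, ∀ a : U, f x a ∈ XF) (hFne : XF.Nonempty)
    (hr0 : ∀ x ∈ XF, ∀ a : U, r x a = 0)
    (hVne : (viab f XF).Nonempty) (hUne : ((viab f XF)ᶜ).Nonempty)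
    (Tf : ℕ) (hTf : ∀ x, x ∉ viab f XF → ∀ u : X → U, ∃ t ≤ Tf, traj f u x t ∈ XF)
    (p : ℝ) (hp0 : 0 ≤ p)
    (hp : p > (RXU f XF r * (1 - γ ^ (Tf + 1)) / (1 - γ)
        + (RQU f XF r - RQV f XF r) / γ - infV γ f XF r) / γ ^ Tf) :
    RQU f XF r + γ * supVp γ f XF r p < RQV f XF r + γ * infV γ f XF r := by
  obtain ⟨C, hC⟩ := hr
  haveI : Nonempty (X → U) := ⟨fun _ => Classical.arbitrary U⟩
  have hγTf : (0 : ℝ) < γ ^ Tf := pow_pos hγ0 Tf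
  have h1γ : (1 : ℝ) - γ ≠ 0 := sub_ne_zero.mpr (ne_of_gt (by linarith))
  -- reward on unviable states is at most RXU
  have hbdd : BddAbove {y : ℝ | ∃ x, x ∉ viab f XF ∧ ∃ a : U, y = r x a} := by
    refine ⟨C, ?_⟩
    rintro y ⟨z, _, a, rfl⟩
    exact (abs_le.mp (hC z a)).2
  have hRXU : ∀ z : X, z ∉ viab f XF → ∀ a : U, r z a ≤ RXU f XF r := fun z hz a =>
    le_csSup hbdd ⟨z, hz, a, rfl⟩
  -- main pointwise bound
  have key : ∀ x, x ∉ viab f XF → ∀ u : X → U,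
      ret γ f r x u - p * risk γ f XF x u
        ≤ RXU f XF r * (1 - γ ^ (Tf + 1)) / (1 - γ) - p * γ ^ Tf := by
    intro x hx u
    obtain ⟨t₀, ht₀Tf, ht₀F⟩ := hTf x hx u
    -- risk lower bound
    have hsumrisk : Summable (fun t : ℕ =>
        γ ^ t * XF.indicator (fun _ => (1 : ℝ)) (traj f u x t)) := by
      refine Summable.of_nonneg_of_le (fun t => ?_) (fun t => ?_)
        (summable_geometric_of_lt_one hγ0.le hγ1)
      · have : (0:ℝ) ≤ XF.indicator (fun _ => (1:ℝ)) (traj f u x t) := by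
          by_cases h : traj f u x t ∈ XF <;> simp [h]
        positivity
      · have : XF.indicator (fun _ => (1:ℝ)) (traj f u x t) ≤ 1 := by
          by_cases h : traj f u x t ∈ XF <;> simp [h]
        calc γ ^ t * XF.indicator (fun _ => (1:ℝ)) (traj f u x t)
            ≤ γ ^ t * 1 := mul_le_mul_of_nonneg_left this (pow_nonneg hγ0.le t)
          _ = γ ^ t := mul_one _
    have hrisk : γ ^ Tf ≤ risk γ f XF x u := by
      have h1 : γ ^ t₀ * XF.indicator (fun _ => (1:ℝ)) (traj f u x t₀)
          ≤ risk γ f XF x u := by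
        refine Summable.le_tsum hsumrisk t₀ (fun j _ => ?_)
        have : (0:ℝ) ≤ XF.indicator (fun _ => (1:ℝ)) (traj f u x j) := by
          by_cases h : traj f u x j ∈ XF <;> simp [h]
        positivity
      rw [Set.indicator_of_mem ht₀F, mul_one] at h1
      exact le_trans (pow_le_pow_of_le_one hγ0.le hγ1.le ht₀Tf) h1
    -- return upper bound
    have hretsum : ret γ f r x u = ∑ t ∈ Finset.range (Tf + 1),
        γ ^ t * r (traj f u x t) (u (traj f u x t)) := by
      refine tsum_eq_sum (fun t ht => ?_)
      have ht' : Tf + 1 ≤ t := by simpa [Finset.mem_range, not_lt] using ht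
      have : traj f u x t ∈ XF :=
        traj_absorb f XF habs u x ht₀F t (by omega)
      rw [hr0 _ this, mul_zero]
    have hret : ret γ f r x u ≤ RXU f XF r * (1 - γ ^ (Tf + 1)) / (1 - γ) := by
      rw [hretsum]
      calc ∑ t ∈ Finset.range (Tf + 1), γ ^ t * r (traj f u x t) (u (traj f u x t))
          ≤ ∑ t ∈ Finset.range (Tf + 1), γ ^ t * RXU f XF r := by
            refine Finset.sum_le_sum (fun t _ => ?_)
            exact mul_le_mul_of_nonneg_left
              (hRXU _ (traj_notViab f XF habs hx u t) _) (pow_nonneg hγ0.le t)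
        _ = (∑ t ∈ Finset.range (Tf + 1), γ ^ t) * RXU f XF r := by
            rw [Finset.sum_mul]
        _ = RXU f XF r * (1 - γ ^ (Tf + 1)) / (1 - γ) := by
            have hγ1' : γ - 1 ≠ 0 := sub_ne_zero.mpr (ne_of_lt hγ1)
            rw [geom_sum_eq (ne_of_lt hγ1), div_mul_eq_mul_div,
              div_eq_div_iff hγ1' h1γ]
            ring
    have hrisk' : p * γ ^ Tf ≤ p * risk γ f XF x u :=
      mul_le_mul_of_nonneg_left hrisk hp0
    linarith
  -- bound on Vpen, then on supVp
  have hVpen : ∀ x, x ∉ viab f XF →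
      Vpen γ f XF r p x ≤ RXU f XF r * (1 - γ ^ (Tf + 1)) / (1 - γ) - p * γ ^ Tf := by
    intro x hx
    exact ciSup_le (fun u => key x hx u)
  obtain ⟨x₁, hx₁⟩ := hUne
  have hsup : supVp γ f XF r p
      ≤ RXU f XF r * (1 - γ ^ (Tf + 1)) / (1 - γ) - p * γ ^ Tf := by
    refine csSup_le ⟨Vpen γ f XF r p x₁, x₁, hx₁, rfl⟩ ?_
    rintro y ⟨z, hz, rfl⟩
    exact hVpen z hz
  -- final algebra
  rw [gt_iff_lt, div_lt_iff₀ hγTf] at hp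
  have h1 : γ * supVp γ f XF r p
      ≤ γ * (RXU f XF r * (1 - γ ^ (Tf + 1)) / (1 - γ) - p * γ ^ Tf) :=
    mul_le_mul_of_nonneg_left hsup hγ0.le
  have h2 : γ * (RXU f XF r * (1 - γ ^ (Tf + 1)) / (1 - γ)
        + (RQU f XF r - RQV f XF r) / γ - infV γ f XF r) < γ * (p * γ ^ Tf) :=
    mul_lt_mul_of_pos_left hp hγ0
  have h3 : γ * ((RQU f XF r - RQV f XF r) / γ) = RQU f XF r - RQV f XF r :=
    mul_div_cancel₀ _ (ne_of_gt hγ0)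
  rw [mul_sub] at h1
  rw [mul_sub, mul_add, h3] at h2
  linarith
end
end

section
/- (Main result: large penalties yield safe and constrained-optimal maximizers.) Assume X_F is absorbing (f(x,a) ∈ X_F whenever x ∈ X_F) and nonempty, r(x,a) = 0 whenever x ∈ X_F, X_V and X_U are nonempty, and the bounded time-to-failure assumption holds with bound T_f. Define p* = (R_{X_U} · (1 − γ^{T_f+1})/(1 − γ) + (R_{Q_U} − R_{Q_V})/γ − sInf {V(x) | x ∈ X_V}) / γ^{T_f}. Then for every p with p ≥ 0 and p > p*, and for every x ∈ X_V, every controller u with G(x,u) − p·ρ(x,u) = V_p(x) is safe for x and satisfies G(x,u) = V(x). -/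
open Set

noncomputable section

set_option linter.unusedSectionVars false
set_option linter.unusedVariables false

section Aux

private lemma traj_add {X U : Type*} (f : X → U → X) (u : X → U) (x : X) (s t : ℕ) :
    traj f u x (s + t) = traj f u (traj f u x s) t := by
  induction t with
  | zero => rfl
  | succ t ih => show traj f u x (s + t + 1) = _; rw [traj, ih]; rfl

private lemma safe_shift {X U : Type*} {f : X → U → X} {XF : Set X} {u : X → U} {x : X}
    (h : SafeFor f XF u x) (s : ℕ) : SafeFor f XF u (traj f u x s) := by
  intro t; rw [← traj_add]; exact h (s + t)

private lemma traj_mem_viab {X U : Type*} {f : X → U → X} {XF : Set X} {u : X → U} {x : X}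
    (h : SafeFor f XF u x) (s : ℕ) : traj f u x s ∈ viab f XF :=
  ⟨u, safe_shift h s⟩

private lemma viab_not_XF {X U : Type*} {f : X → U → X} {XF : Set X} {x : X}
    (h : x ∈ viab f XF) : x ∉ XF := by
  obtain ⟨u, hu⟩ := h; exact hu 0

private lemma traj_XF {X U : Type*} {f : X → U → X} {XF : Set X}
    (habs : ∀ x ∈ XF, ∀ a : U, f x a ∈ XF) {u : X → U} {x : X} {s : ℕ}
    (h : traj f u x s ∈ XF) {t : ℕ} (hst : s ≤ t) : traj f u x t ∈ XF := by
  obtain ⟨d, rfl⟩ := Nat.exists_eq_add_of_le hst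
  clear hst
  rw [traj_add]
  induction d with
  | zero => exact h
  | succ d ih => exact habs _ ih _

section Series

variable {X U : Type*} {f : X → U → X} {XF : Set X} {r : X → U → ℝ} {γ C : ℝ}
  (hγ0 : 0 < γ) (hγ1 : γ < 1) (hC : ∀ x a, |r x a| ≤ C)

include hγ0 hγ1 hC in
private lemma summable_ret (u : X → U) (x : X) :
    Summable (fun t : ℕ => γ ^ t * r (traj f u x t) (u (traj f u x t))) := by
  apply Summable.of_norm_bounded
    ((summable_geometric_of_lt_one hγ0.le hγ1).mul_left C)
  intro t
  rw [norm_mul, norm_pow, Real.norm_eq_abs, Real.norm_eq_abs, abs_of_pos hγ0, mul_comm]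
  exact mul_le_mul_of_nonneg_right (hC _ _) (pow_nonneg hγ0.le t)

include hγ0 hγ1 in
private lemma summable_risk (u : X → U) (x : X) :
    Summable (fun t : ℕ => γ ^ t * XF.indicator (fun _ => (1:ℝ)) (traj f u x t)) := by
  apply Summable.of_norm_bounded
    ((summable_geometric_of_lt_one hγ0.le hγ1).mul_left 1)
  intro t
  rw [norm_mul, norm_pow, Real.norm_eq_abs, Real.norm_eq_abs, abs_of_pos hγ0, mul_comm]
  refine mul_le_mul_of_nonneg_right ?_ (pow_nonneg hγ0.le t)
  by_cases h : traj f u x t ∈ XF <;>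
    simp [Set.indicator_of_mem, Set.indicator_of_notMem, h]

include hγ0 hγ1 hC in
private lemma ret_split (u : X → U) (x : X) (n : ℕ) :
    ret γ f r x u = (∑ t ∈ Finset.range n, γ ^ t * r (traj f u x t) (u (traj f u x t)))
      + γ ^ n * ret γ f r (traj f u x n) u := by
  have hs := summable_ret (f := f) hγ0 hγ1 hC u x
  rw [ret, ← Summable.sum_add_tsum_nat_add n hs]
  congr 1
  rw [ret, ← tsum_mul_left]
  apply tsum_congr; intro t
  rw [← traj_add, add_comm t n, pow_add]; ring

include hγ0 hγ1 hC in
private lemma ret_succ (u : X → U) (x : X) :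
    ret γ f r x u = r x (u x) + γ * ret γ f r (f x (u x)) u := by
  have := ret_split (f := f) hγ0 hγ1 hC u x 1
  simpa [traj] using this

include hγ0 hγ1 in
private lemma risk_split (u : X → U) (x : X) (n : ℕ) :
    risk γ f XF x u = (∑ t ∈ Finset.range n,
        γ ^ t * XF.indicator (fun _ => (1:ℝ)) (traj f u x t))
      + γ ^ n * risk γ f XF (traj f u x n) u := by
  have hs := summable_risk (f := f) (XF := XF) hγ0 hγ1 u x
  rw [risk, ← Summable.sum_add_tsum_nat_add n hs]
  congr 1
  rw [risk, ← tsum_mul_left]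
  apply tsum_congr; intro t
  rw [← traj_add, add_comm t n, pow_add]; ring

include hγ0 hγ1 in
private lemma risk_succ (u : X → U) (x : X) :
    risk γ f XF x u = XF.indicator (fun _ => (1:ℝ)) x
      + γ * risk γ f XF (f x (u x)) u := by
  have := risk_split (f := f) (XF := XF) hγ0 hγ1 u x 1
  simpa [traj] using this

private lemma risk_nonneg (hγ0' : 0 < γ) (u : X → U) (x : X) : 0 ≤ risk γ f XF x u := by
  refine tsum_nonneg fun t => mul_nonneg (pow_nonneg hγ0'.le t) ?_
  exact Set.indicator_nonneg (fun _ _ => zero_le_one) _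

private lemma risk_of_safe {u : X → U} {x : X} (h : SafeFor f XF u x) :
    risk γ f XF x u = 0 := by
  have h0 : ∀ t : ℕ, γ ^ t * XF.indicator (fun _ => (1:ℝ)) (traj f u x t) = 0 := by
    intro t; rw [Set.indicator_of_notMem (h t)]; ring
  rw [risk, tsum_congr h0, tsum_zero]

include hγ0 hγ1 in
private lemma risk_of_XF (habs : ∀ x ∈ XF, ∀ a : U, f x a ∈ XF) (u : X → U) {x : X}
    (h : x ∈ XF) : risk γ f XF x u = (1 - γ)⁻¹ := by
  have : ∀ t : ℕ, γ ^ t * XF.indicator (fun _ => (1:ℝ)) (traj f u x t) = γ ^ t := by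
    intro t
    rw [Set.indicator_of_mem (traj_XF habs (s := 0) h (Nat.zero_le t)), mul_one]
  rw [risk, tsum_congr this, tsum_geometric_of_lt_one hγ0.le hγ1]

include hγ0 hγ1 in
private lemma risk_ge_pow (habs : ∀ x ∈ XF, ∀ a : U, f x a ∈ XF) (u : X → U) {x : X}
    {s : ℕ} (h : traj f u x s ∈ XF) : γ ^ s * (1 - γ)⁻¹ ≤ risk γ f XF x u := by
  have h1 := risk_split (f := f) (XF := XF) hγ0 hγ1 u x s
  have h2 := risk_of_XF (f := f) hγ0 hγ1 habs u h
  have h3 : 0 ≤ ∑ t ∈ Finset.range s,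
      γ ^ t * XF.indicator (fun _ => (1:ℝ)) (traj f u x t) := by
    refine Finset.sum_nonneg fun t _ => mul_nonneg (pow_nonneg hγ0.le t) ?_
    exact Set.indicator_nonneg (fun _ _ => zero_le_one) _
  rw [h2] at h1; linarith

include hγ0 hγ1 hC in
private lemma abs_ret_le (u : X → U) (x : X) :
    |ret γ f r x u| ≤ C * (1 - γ)⁻¹ := by
  have h1 : ∀ t : ℕ, ‖γ ^ t * r (traj f u x t) (u (traj f u x t))‖ ≤ C * γ ^ t := by
    intro t
    rw [norm_mul, norm_pow, Real.norm_eq_abs, Real.norm_eq_abs, abs_of_pos hγ0, mul_comm]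
    exact mul_le_mul_of_nonneg_right (hC _ _) (pow_nonneg hγ0.le t)
  have h2 := tsum_of_norm_bounded ((hasSum_geometric_of_lt_one hγ0.le hγ1).mul_left C) h1
  simpa [Real.norm_eq_abs, ret] using h2

end Series

section Aux2

variable {X U : Type*} {f : X → U → X} {XF : Set X} {r : X → U → ℝ} {γ C : ℝ}

private lemma update_traj [DecidableEq X] {u' : X → U} {x : X} {a : U}
    (hx : ∀ t : ℕ, traj f u' (f x a) t ≠ x) (s : ℕ) :
    traj f (Function.update u' x a) x (s + 1) = traj f u' (f x a) s := by
  induction s with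
  | zero =>
      show f (traj f (Function.update u' x a) x 0) _ = f x a
      simp [traj, Function.update_self]
  | succ s ih =>
      show f (traj f (Function.update u' x a) x (s + 1)) _ = _
      rw [ih, Function.update_of_ne (hx s)]
      rfl

private lemma mem_viab_of_next (habs : ∀ x ∈ XF, ∀ a : U, f x a ∈ XF) {x : X} {a : U}
    (hxF : x ∉ XF) (hz : f x a ∈ viab f XF) : x ∈ viab f XF := by
  classical
  obtain ⟨u', hu'⟩ := hz
  by_cases hx : ∃ t, traj f u' (f x a) t = x
  · obtain ⟨t0, ht0⟩ := hx
    refine ⟨u', fun t => ?_⟩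
    have h : traj f u' x t = traj f u' (f x a) (t0 + t) := by rw [traj_add, ht0]
    rw [h]; exact hu' (t0 + t)
  · push_neg at hx
    refine ⟨Function.update u' x a, fun t => ?_⟩
    cases t with
    | zero => exact hxF
    | succ s => rw [update_traj hx s]; exact hu' s

private lemma not_viab_step (habs : ∀ x ∈ XF, ∀ a : U, f x a ∈ XF) {x : X}
    (hx : x ∉ viab f XF) (a : U) : f x a ∉ viab f XF := by
  intro hz
  by_cases hxF : x ∈ XF
  · exact viab_not_XF hz (habs x hxF a)
  · exact hx (mem_viab_of_next habs hxF hz)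

private lemma not_viab_traj (habs : ∀ x ∈ XF, ∀ a : U, f x a ∈ XF) {x : X}
    (hx : x ∉ viab f XF) (u : X → U) (t : ℕ) : traj f u x t ∉ viab f XF := by
  induction t with
  | zero => exact hx
  | succ t ih => exact not_viab_step habs ih _

variable (hγ0 : 0 < γ) (hγ1 : γ < 1) (hC : ∀ x a, |r x a| ≤ C)

include hγ0 hγ1 hC in
private lemma bddAbove_safe_ret (x : X) :
    BddAbove (Set.range fun v : {u : X → U // SafeFor f XF u x} => ret γ f r x (v : X → U)) := by
  refine ⟨C * (1 - γ)⁻¹, ?_⟩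
  rintro _ ⟨v, rfl⟩
  exact (abs_le.1 (abs_ret_le hγ0 hγ1 hC _ x)).2

include hγ0 hγ1 hC in
private lemma ret_le_vcon {u : X → U} {x : X} (hu : SafeFor f XF u x) :
    ret γ f r x u ≤ Vcon γ f XF r x :=
  le_ciSup (bddAbove_safe_ret hγ0 hγ1 hC x) (⟨u, hu⟩ : {u : X → U // SafeFor f XF u x})

include hγ0 hγ1 hC in
private lemma vcon_step (habs : ∀ x ∈ XF, ∀ a : U, f x a ∈ XF) {x : X} {a : U}
    (hxF : x ∉ XF) (hz : f x a ∈ viab f XF) :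
    r x a + γ * Vcon γ f XF r (f x a) ≤ Vcon γ f XF r x := by
  classical
  have hkey : ∀ u' : X → U, SafeFor f XF u' (f x a) →
      r x a + γ * ret γ f r (f x a) u' ≤ Vcon γ f XF r x := by
    intro u' hu'
    by_cases hx : ∃ t, traj f u' (f x a) t = x
    · -- the near-optimal safe trajectory revisits `x`
      have ht0 : traj f u' (f x a) (Nat.find hx) = x := Nat.find_spec hx
      set t0 := Nat.find hx with ht0def
      have hmin : ∀ t < t0, traj f u' (f x a) t ≠ x := fun t ht => Nat.find_min hx ht
      have hu'x : SafeFor f XF u' x := by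
        intro t
        have h : traj f u' x t = traj f u' (f x a) (t0 + t) := by rw [traj_add, ht0]
        rw [h]; exact hu' (t0 + t)
      set v := Function.update u' x a with hvdef
      have keyv : ∀ s ≤ t0, traj f v x (s + 1) = traj f u' (f x a) s := by
        intro s hs
        induction s with
        | zero => show f (traj f v x 0) _ = f x a; simp [traj, hvdef, Function.update_self]
        | succ s ih =>
            show f (traj f v x (s + 1)) (v (traj f v x (s + 1))) = _
            rw [ih (by omega), hvdef, Function.update_of_ne (hmin s (by omega))]
            rfl
      have hper : traj f v x (t0 + 1) = x := by rw [keyv t0 le_rfl, ht0]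
      have hper_all : ∀ q : ℕ, traj f v x ((t0 + 1) * q) = x := by
        intro q
        induction q with
        | zero => rfl
        | succ q ih => rw [Nat.mul_succ, traj_add, ih, hper]
      have hall : ∀ t : ℕ, traj f v x t = traj f v x (t % (t0 + 1)) := by
        intro t
        conv_lhs => rw [← Nat.div_add_mod t (t0 + 1)]
        rw [traj_add, hper_all]
      have hsafev : SafeFor f XF v x := by
        intro t
        rw [hall t]
        have hm : t % (t0 + 1) ≤ t0 := Nat.lt_succ_iff.1 (Nat.mod_lt _ (Nat.succ_pos _))
        rcases Nat.eq_zero_or_eq_succ_pred (t % (t0 + 1)) with h0 | hsucc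
        · rw [h0]; exact hxF
        · rw [hsucc, keyv _ (by omega)]; exact hu' _
      have E1 := ret_split (f := f) hγ0 hγ1 hC v x (t0 + 1)
      rw [hper] at E1
      have E2 := ret_split (f := f) hγ0 hγ1 hC u' (f x a) t0
      rw [ht0] at E2
      have E3 : (∑ t ∈ Finset.range (t0 + 1), γ ^ t * r (traj f v x t) (v (traj f v x t)))
          = r x a + γ * ∑ t ∈ Finset.range t0,
              γ ^ t * r (traj f u' (f x a) t) (u' (traj f u' (f x a) t)) := by
        rw [Finset.sum_range_succ']
        have hterm : ∀ i ∈ Finset.range t0,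
            γ ^ (i + 1) * r (traj f v x (i + 1)) (v (traj f v x (i + 1)))
              = γ * (γ ^ i * r (traj f u' (f x a) i) (u' (traj f u' (f x a) i))) := by
          intro i hi
          rw [Finset.mem_range] at hi
          rw [keyv i hi.le, hvdef, Function.update_of_ne (hmin i hi), pow_succ]
          ring
        rw [Finset.sum_congr rfl hterm, ← Finset.mul_sum]
        have h0 : γ ^ 0 * r (traj f v x 0) (v (traj f v x 0)) = r x a := by
          simp [traj, hvdef, Function.update_self]
        rw [h0]; ring
      have retv_le := ret_le_vcon hγ0 hγ1 hC hsafev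
      have retu'_le := ret_le_vcon hγ0 hγ1 hC hu'x
      have E1' : (∑ t ∈ Finset.range (t0 + 1), γ ^ t * r (traj f v x t) (v (traj f v x t)))
          = (1 - γ ^ (t0 + 1)) * ret γ f r x v := by linear_combination -E1
      have main : r x a + γ * ret γ f r (f x a) u'
          = (∑ t ∈ Finset.range (t0 + 1), γ ^ t * r (traj f v x t) (v (traj f v x t)))
            + γ ^ (t0 + 1) * ret γ f r x u' := by
        rw [E2, E3, pow_succ]; ring
      rw [main, E1']
      have hgle : γ ^ (t0 + 1) ≤ 1 := pow_le_one₀ hγ0.le hγ1.le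
      have h1 := mul_le_mul_of_nonneg_left retu'_le (pow_pos hγ0 (t0 + 1)).le
      have h2 := mul_le_mul_of_nonneg_left retv_le (sub_nonneg.2 hgle)
      linarith
    · -- the safe trajectory never revisits `x`
      push_neg at hx
      set v := Function.update u' x a with hvdef
      have hsafev : SafeFor f XF v x := by
        intro t
        cases t with
        | zero => exact hxF
        | succ s => rw [update_traj hx s]; exact hu' s
      have htrajeq : ∀ t : ℕ, traj f v (f x a) t = traj f u' (f x a) t := by
        intro t
        induction t with
        | zero => rfl
        | succ t ih =>
            show f (traj f v (f x a) t) (v (traj f v (f x a) t)) = _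
            rw [ih, hvdef, Function.update_of_ne (hx t)]
            rfl
      have hreteq : ret γ f r (f x a) v = ret γ f r (f x a) u' := by
        rw [ret, ret]
        apply tsum_congr; intro t
        rw [htrajeq t, hvdef, Function.update_of_ne (hx t)]
      have hv : ret γ f r x v = r x a + γ * ret γ f r (f x a) u' := by
        rw [ret_succ hγ0 hγ1 hC v x]
        have hva : v x = a := Function.update_self x a u'
        rw [hva, hreteq]
      rw [← hv]
      exact ret_le_vcon hγ0 hγ1 hC hsafev
  -- conclude from the supremum characterization of `Vcon (f x a)`
  obtain ⟨u0, hu0⟩ := hz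
  haveI : Nonempty {u : X → U // SafeFor f XF u (f x a)} := ⟨⟨u0, hu0⟩⟩
  have hsup : Vcon γ f XF r (f x a) ≤ (Vcon γ f XF r x - r x a) / γ := by
    apply ciSup_le
    intro v
    rw [le_div_iff₀ hγ0]
    have := hkey v v.2
    linarith
  have h2 : γ * ((Vcon γ f XF r x - r x a) / γ) = Vcon γ f XF r x - r x a := by
    field_simp
  have := mul_le_mul_of_nonneg_left hsup hγ0.le
  linarith

end Aux2

end Aux

/-- Main result: for any penalty larger than the finite threshold `p*`,
every maximizer of the penalized objective at a viable state is safe and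
constrained-optimal. -/
theorem large_penalty_yields_safe_optimal_maximizers {X U : Type*} [Nonempty U]
    (f : X → U → X) (XF : Set X) (γ : ℝ) (hγ0 : 0 < γ) (hγ1 : γ < 1)
    (r : X → U → ℝ) (hr : ∃ C : ℝ, ∀ x a, |r x a| ≤ C)
    (habs : ∀ x ∈ XF, ∀ a : U, f x a ∈ XF) (hFne : XF.Nonempty)
    (hr0 : ∀ x ∈ XF, ∀ a : U, r x a = 0)
    (hVne : (viab f XF).Nonempty) (hUne : ((viab f XF)ᶜ).Nonempty)
    (Tf : ℕ) (hTf : ∀ x, x ∉ viab f XF → ∀ u : X → U, ∃ t ≤ Tf, traj f u x t ∈ XF)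
    (p : ℝ) (hp0 : 0 ≤ p)
    (hp : p > (RXU f XF r * (1 - γ ^ (Tf + 1)) / (1 - γ)
        + (RQU f XF r - RQV f XF r) / γ - infV γ f XF r) / γ ^ Tf) :
    ∀ x ∈ viab f XF, ∀ u : X → U,
      ret γ f r x u - p * risk γ f XF x u = Vpen γ f XF r p x →
        SafeFor f XF u x ∧ ret γ f r x u = Vcon γ f XF r x := by
  classical
  obtain ⟨C, hC⟩ := hr
  have hγinv : (0:ℝ) < (1 - γ)⁻¹ := inv_pos.2 (by linarith)
  -- boundedness facts for the three sup/inf constants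
  have hRXU_mem : ∀ {y : X} (a : U), y ∉ viab f XF → r y a ≤ RXU f XF r := by
    intro y a hy
    refine le_csSup ⟨C, ?_⟩ ⟨y, hy, a, rfl⟩
    rintro _ ⟨z, _, b, rfl⟩
    exact (abs_le.1 (hC z b)).2
  have hRQU_mem : ∀ {y : X} {a : U}, f y a ∉ viab f XF → r y a ≤ RQU f XF r := by
    intro y a hy
    refine le_csSup ⟨C, ?_⟩ ⟨(y, a), hy, rfl⟩
    rintro _ ⟨q, _, rfl⟩
    exact (abs_le.1 (hC q.1 q.2)).2
  have hRQV_mem : ∀ {y : X} {a : U}, f y a ∈ viab f XF → RQV f XF r ≤ r y a := by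
    intro y a hy
    refine csInf_le ⟨-C, ?_⟩ ⟨(y, a), hy, rfl⟩
    rintro _ ⟨q, _, rfl⟩
    exact (abs_le.1 (hC q.1 q.2)).1
  -- infimum of the constrained value over the kernel
  have hinfV_le : ∀ {y : X}, y ∈ viab f XF → infV γ f XF r ≤ Vcon γ f XF r y := by
    intro y hy
    refine csInf_le ⟨-(C * (1 - γ)⁻¹), ?_⟩ ⟨y, hy, rfl⟩
    rintro _ ⟨z, hz, rfl⟩
    obtain ⟨u0, hu0⟩ := hz
    have h1 := ret_le_vcon hγ0 hγ1 hC hu0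
    have h2 := (abs_le.1 (abs_ret_le (f := f) hγ0 hγ1 hC u0 z)).1
    linarith
  have hkeyV : RQV f XF r + γ * infV γ f XF r ≤ infV γ f XF r := by
    refine le_csInf ⟨Vcon γ f XF r hVne.some, hVne.some, hVne.some_mem, rfl⟩ ?_
    rintro _ ⟨y, hy, rfl⟩
    have hyv : y ∈ viab f XF := hy
    obtain ⟨u0, hu0⟩ := hy
    have hz : f y (u0 y) ∈ viab f XF := traj_mem_viab hu0 1
    have h1 : RQV f XF r ≤ r y (u0 y) := hRQV_mem hz
    have h2 : infV γ f XF r ≤ Vcon γ f XF r (f y (u0 y)) := hinfV_le hz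
    have h3 : r y (u0 y) + γ * Vcon γ f XF r (f y (u0 y)) ≤ Vcon γ f XF r y :=
      vcon_step hγ0 hγ1 hC habs (viab_not_XF hyv) hz
    have h4 := mul_le_mul_of_nonneg_left h2 hγ0.le
    linarith
  -- the key claim, by induction on the exit time
  have claim : ∀ k : ℕ, ∀ x ∈ viab f XF, ∀ u : X → U,
      traj f u x (k + 1) ∉ viab f XF → (∀ t ≤ k, traj f u x t ∈ viab f XF) →
      ret γ f r x u - p * risk γ f XF x u < Vcon γ f XF r x := by
    intro k
    induction k with
    | zero =>
        intro x hx u hexit _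
        have hx1 : f x (u x) ∉ viab f XF := hexit
        obtain ⟨s, hs, hsF⟩ := hTf (f x (u x)) hx1 u
        have htail : ∀ t ∉ Finset.range (Tf + 1),
            γ ^ t * r (traj f u (f x (u x)) t) (u (traj f u (f x (u x)) t)) = 0 := by
          intro t ht
          rw [Finset.mem_range, not_lt] at ht
          have hmem : traj f u (f x (u x)) t ∈ XF := traj_XF habs hsF (by omega)
          rw [hr0 _ hmem, mul_zero]
        have hret1 : ret γ f r (f x (u x)) u
            = ∑ t ∈ Finset.range (Tf + 1),
                γ ^ t * r (traj f u (f x (u x)) t) (u (traj f u (f x (u x)) t)) := by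
          rw [ret]; exact tsum_eq_sum htail
        have hret2 : ret γ f r (f x (u x)) u
            ≤ (∑ t ∈ Finset.range (Tf + 1), γ ^ t) * RXU f XF r := by
          rw [hret1, Finset.sum_mul]
          refine Finset.sum_le_sum fun t _ => ?_
          exact mul_le_mul_of_nonneg_left
            (hRXU_mem (u (traj f u (f x (u x)) t)) (not_viab_traj habs hx1 u t))
            (pow_nonneg hγ0.le t)
        have hrQU : r x (u x) ≤ RQU f XF r := hRQU_mem hx1
        have hret := ret_succ (f := f) hγ0 hγ1 hC u x
        have hrisk := risk_succ (f := f) (XF := XF) hγ0 hγ1 u x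
        rw [Set.indicator_of_notMem (viab_not_XF hx)] at hrisk
        have hriskz : γ ^ Tf * (1 - γ)⁻¹ ≤ risk γ f XF (f x (u x)) u := by
          have h1 := risk_ge_pow (f := f) hγ0 hγ1 habs u hsF
          have hpow : γ ^ Tf ≤ γ ^ s := pow_le_pow_of_le_one hγ0.le hγ1.le hs
          have h2 := mul_le_mul_of_nonneg_right hpow hγinv.le
          linarith
        -- arithmetic on the penalty threshold
        have hS : ((1 : ℝ) - γ ^ (Tf + 1)) / (1 - γ) = ∑ t ∈ Finset.range (Tf + 1), γ ^ t := by
          rw [geom_sum_eq hγ1.ne]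
          rw [div_eq_div_iff (by linarith) (by linarith)]
          ring
        have hK : (0:ℝ) < γ ^ Tf := pow_pos hγ0 Tf
        rw [gt_iff_lt, div_lt_iff₀ hK] at hp
        have hp3 := mul_lt_mul_of_pos_left hp hγ0
        have e1 : γ * (RXU f XF r * (1 - γ ^ (Tf + 1)) / (1 - γ)
              + (RQU f XF r - RQV f XF r) / γ - infV γ f XF r)
            = γ * (RXU f XF r * ((1 - γ ^ (Tf + 1)) / (1 - γ)))
              + (RQU f XF r - RQV f XF r) - γ * infV γ f XF r := by
          field_simp
        rw [e1, hS] at hp3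
        have h1γ : 1 ≤ (1 - γ)⁻¹ := by
          rw [le_inv_comm₀ one_pos (by linarith)]
          linarith
        have hpKγ : (0:ℝ) ≤ p * γ ^ Tf * γ := by positivity
        have hmul : p * γ ^ Tf * γ * 1 ≤ p * γ ^ Tf * γ * (1 - γ)⁻¹ :=
          mul_le_mul_of_nonneg_left h1γ hpKγ
        have hrb' : γ * (γ ^ Tf * (1 - γ)⁻¹) ≤ γ * risk γ f XF (f x (u x)) u :=
          mul_le_mul_of_nonneg_left hriskz hγ0.le
        have hrb : p * (γ * (γ ^ Tf * (1 - γ)⁻¹)) ≤ p * (γ * risk γ f XF (f x (u x)) u) :=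
          mul_le_mul_of_nonneg_left hrb' hp0
        have hγret := mul_le_mul_of_nonneg_left hret2 hγ0.le
        have hIle := hinfV_le hx
        have hprisk : p * risk γ f XF x u = p * (γ * risk γ f XF (f x (u x)) u) := by
          rw [hrisk]; ring
        linarith
    | succ k ih =>
        intro x hx u hexit hall
        have hx1 : f x (u x) ∈ viab f XF := hall 1 (by omega)
        have h1 : traj f u x 1 = f x (u x) := rfl
        have hnext : traj f u (f x (u x)) (k + 1) ∉ viab f XF := by
          have h : traj f u x (k + 1 + 1) = traj f u (f x (u x)) (k + 1) := by
            rw [show k + 1 + 1 = 1 + (k + 1) by omega, traj_add, h1]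
          rw [← h]; exact hexit
        have hall1 : ∀ t ≤ k, traj f u (f x (u x)) t ∈ viab f XF := by
          intro t ht
          have h : traj f u x (1 + t) = traj f u (f x (u x)) t := by
            rw [traj_add, h1]
          rw [← h]; exact hall (1 + t) (by omega)
        have hIH := ih (f x (u x)) hx1 u hnext hall1
        have hstep := vcon_step hγ0 hγ1 hC habs (viab_not_XF hx) hx1
        have hret := ret_succ (f := f) hγ0 hγ1 hC u x
        have hrisk := risk_succ (f := f) (XF := XF) hγ0 hγ1 u x
        rw [Set.indicator_of_notMem (viab_not_XF hx)] at hrisk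
        have hprisk : p * risk γ f XF x u = p * (γ * risk γ f XF (f x (u x)) u) := by
          rw [hrisk]; ring
        have := mul_lt_mul_of_pos_left hIH hγ0
        linarith
  -- main argument
  intro x hx u hmax
  have hbddP : BddAbove (Set.range fun u : X → U =>
      ret γ f r x u - p * risk γ f XF x u) := by
    refine ⟨C * (1 - γ)⁻¹, ?_⟩
    rintro _ ⟨v, rfl⟩
    have h1 := (abs_le.1 (abs_ret_le (f := f) hγ0 hγ1 hC v x)).2
    have h2 := mul_nonneg hp0 (risk_nonneg (f := f) (XF := XF) hγ0 v x)
    simp only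
    linarith
  have hVconVpen : Vcon γ f XF r x ≤ Vpen γ f XF r p x := by
    obtain ⟨u0, hu0⟩ := hx
    haveI : Nonempty {u : X → U // SafeFor f XF u x} := ⟨⟨u0, hu0⟩⟩
    apply ciSup_le
    intro v
    have h1 : ret γ f r x (v : X → U) - p * risk γ f XF x (v : X → U)
        ≤ Vpen γ f XF r p x := le_ciSup hbddP (v : X → U)
    rw [risk_of_safe (f := f) (γ := γ) v.2] at h1
    linarith
  have hsafe : SafeFor f XF u x := by
    by_contra hunsafe
    rw [SafeFor] at hunsafe; push_neg at hunsafe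
    obtain ⟨T, hT⟩ := hunsafe
    have hKne : ∃ t, traj f u x t ∉ viab f XF := ⟨T, fun hv => viab_not_XF hv hT⟩
    have hk := Nat.find_spec hKne
    have hkpos : Nat.find hKne ≠ 0 := by
      intro h0; rw [h0] at hk; exact hk hx
    have hlt := claim (Nat.find hKne - 1) x hx u
      (by rw [show Nat.find hKne - 1 + 1 = Nat.find hKne from by omega]; exact hk)
      (fun t ht => by
        by_contra hnv
        have := Nat.find_min' hKne hnv
        omega)
    rw [hmax] at hlt
    linarith
  refine ⟨hsafe, ?_⟩
  have h0 := risk_of_safe (f := f) (γ := γ) hsafe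
  have hle := ret_le_vcon hγ0 hγ1 hC hsafe
  rw [h0, mul_zero, sub_zero] at hmax
  linarith [hmax ▸ hVconVpen]
end
end
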